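/- arXiv:2109.06093 — 2 statements merged into one kernel-verified Lean document; each statement's English description precedes it below -/
import Mathlib

section
/- Suppose t' > t are time steps such that the conditional expectation of V^π(s_{t'}) given (s_t, a_t) equals its conditional expectation given s_t alone (for trajectories sampled from π). Then the advantage satisfies A^π(s_t, a_t) = E[∑_{k=t}^{t'-1} γ^{k−t} r_k | s_t, a_t] − E[∑_{k=t}^{t'-1} γ^{k−t} r_k | s_t]. In particular, if the one-step transition distribution is independent of the action, t'=t+1 gives A^π(s,a) = r(s,a) − ∑_{a'} π(a'|s) r(s,a'). -/
open Finset Filter Topology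

variable {S A : Type*}

section Defs
variable [Fintype S] [Fintype A] [DecidableEq S] [DecidableEq A]

/-- Distribution of the state-action pair `(s_k, a_k)` for trajectories started in state `s0`
(with all actions, including the first, sampled from the policy `π`). -/
noncomputable def saDistS (π : S → A → ℝ) (P : S → A → S → ℝ) (s0 : S) : ℕ → S × A → ℝ
  | 0 => fun sa => (if sa.1 = s0 then 1 else 0) * π sa.1 sa.2
  | k + 1 => fun sa => (∑ p : S × A, saDistS π P s0 k p * P p.1 p.2 sa.1) * π sa.1 sa.2

/-- Distribution of `(s_k, a_k)` for trajectories started with `s_0 = s0`, `a_0 = a0`. -/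
noncomputable def saDistSA (π : S → A → ℝ) (P : S → A → S → ℝ) (s0 : S) (a0 : A) :
    ℕ → S × A → ℝ
  | 0 => fun sa => if sa = (s0, a0) then 1 else 0
  | k + 1 => fun sa => (∑ p : S × A, saDistSA π P s0 a0 k p * P p.1 p.2 sa.1) * π sa.1 sa.2

/-- Distribution of `(s_k, a_k)` for trajectories with initial state distribution `μ0`. -/
noncomputable def saDistI (π : S → A → ℝ) (P : S → A → S → ℝ) (μ0 : S → ℝ) : ℕ → S × A → ℝ
  | 0 => fun sa => μ0 sa.1 * π sa.1 sa.2
  | k + 1 => fun sa => (∑ p : S × A, saDistI π P μ0 k p * P p.1 p.2 sa.1) * π sa.1 sa.2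

/-- The value function `V^π(s)`: expected discounted return starting from `s`. -/
noncomputable def Vpi (π : S → A → ℝ) (P : S → A → S → ℝ) (r : S → A → ℝ) (γ : ℝ) (s : S) :
    ℝ :=
  ∑' k : ℕ, γ ^ k * ∑ sa : S × A, saDistS π P s k sa * r sa.1 sa.2

/-- The action-value function `Q^π(s, a)`: expected discounted return starting from `(s, a)`. -/
noncomputable def Qpi (π : S → A → ℝ) (P : S → A → S → ℝ) (r : S → A → ℝ) (γ : ℝ) (s : S)
    (a : A) : ℝ :=
  ∑' k : ℕ, γ ^ k * ∑ sa : S × A, saDistSA π P s a k sa * r sa.1 sa.2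

/-- The advantage function `A^π = Q^π - V^π`. -/
noncomputable def Api (π : S → A → ℝ) (P : S → A → S → ℝ) (r : S → A → ℝ) (γ : ℝ) (s : S)
    (a : A) : ℝ :=
  Qpi π P r γ s a - Vpi π P r γ s

/-- `π` is a policy: a probability distribution over actions at each state. -/
def IsPolicy (π : S → A → ℝ) : Prop := (∀ s a, 0 ≤ π s a) ∧ ∀ s, ∑ a : A, π s a = 1

/-- `P` is a transition kernel. -/
def IsKernel (P : S → A → S → ℝ) : Prop :=
  (∀ s a s', 0 ≤ P s a s') ∧ ∀ s a, ∑ s' : S, P s a s' = 1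

/-- `μ0` is a probability distribution over states. -/
def IsDist (μ0 : S → ℝ) : Prop := (∀ s, 0 ≤ μ0 s) ∧ ∑ s : S, μ0 s = 1

/-- `f` is `π`-centered: `∑_a π(a|s) f(s,a) = 0` at every state. -/
def IsCentered (π : S → A → ℝ) (f : S → A → ℝ) : Prop := ∀ s, ∑ a : A, π s a * f s a = 0

/-- Probability of the trajectory prefix `(s_0, a_0, …, s_n, a_n)` under policy `π`,
kernel `P` and initial state distribution `μ0`. -/
noncomputable def pathProb (π : S → A → ℝ) (P : S → A → S → ℝ) (μ0 : S → ℝ) (n : ℕ)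
    (τ : Fin (n + 1) → S × A) : ℝ :=
  μ0 (τ 0).1 * (∏ k : Fin (n + 1), π (τ k).1 (τ k).2) *
    ∏ k : Fin n, P (τ k.castSucc).1 (τ k.castSucc).2 (τ k.succ).1

/-- Expectation, over trajectory prefixes of length `n + 1`, of a function `f` of the prefix. -/
noncomputable def pathExp (π : S → A → ℝ) (P : S → A → S → ℝ) (μ0 : S → ℝ) (n : ℕ)
    (f : (Fin (n + 1) → S × A) → ℝ) : ℝ :=
  ∑ τ : Fin (n + 1) → S × A, pathProb π P μ0 n τ * f τ

/-- `n`-step bootstrapped action-value: `E[∑_{k<m} γ^k r_k + γ^m Vtgt(s_m) | s_0 = s, a_0 = a]`. -/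
noncomputable def nstepQ (π : S → A → ℝ) (P : S → A → S → ℝ) (r : S → A → ℝ) (γ : ℝ)
    (Vtgt : S → ℝ) (m : ℕ) (s : S) (a : A) : ℝ :=
  (∑ k ∈ Finset.range m, γ ^ k * ∑ sa : S × A, saDistSA π P s a k sa * r sa.1 sa.2)
    + γ ^ m * ∑ sa : S × A, saDistSA π P s a m sa * Vtgt sa.1

/-- `n`-step bootstrapped value: `E[∑_{k<m} γ^k r_k + γ^m Vtgt(s_m) | s_0 = s]`. -/
noncomputable def nstepV (π : S → A → ℝ) (P : S → A → S → ℝ) (r : S → A → ℝ) (γ : ℝ)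
    (Vtgt : S → ℝ) (m : ℕ) (s : S) : ℝ :=
  ∑ a : A, π s a * nstepQ π P r γ Vtgt m s a

/-- `π`-centering projection. -/
noncomputable def centerProj (π : S → A → ℝ) (f : S → A → ℝ) (s : S) (a : A) : ℝ :=
  f s a - ∑ a' : A, π s a' * f s a'

end Defs

section Aux
variable [Fintype S] [Fintype A] [DecidableEq S] [DecidableEq A]
variable {π : S → A → ℝ} {P : S → A → S → ℝ}

lemma saDistSA_nonneg (hπ : IsPolicy π) (hP : IsKernel P) (s : S) (a : A) :
    ∀ n sa, 0 ≤ saDistSA π P s a n sa := by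
  intro n
  induction n with
  | zero => intro sa; simp [saDistSA]; positivity
  | succ k ih =>
    intro sa
    refine mul_nonneg (Finset.sum_nonneg fun p _ => mul_nonneg (ih p) (hP.1 _ _ _)) (hπ.1 _ _)

lemma saDistSA_sum_one (hπ : IsPolicy π) (hP : IsKernel P) (s : S) (a : A) :
    ∀ n, ∑ sa : S × A, saDistSA π P s a n sa = 1 := by
  intro n
  induction n with
  | zero => simp [saDistSA]
  | succ k ih =>
    simp only [saDistSA]
    rw [Fintype.sum_prod_type]
    have : ∀ s' : S, ∑ a' : A, (∑ p : S × A, saDistSA π P s a k p * P p.1 p.2 s') * π s' a'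
        = ∑ p : S × A, saDistSA π P s a k p * P p.1 p.2 s' := by
      intro s'; rw [← Finset.mul_sum, hπ.2, mul_one]
    simp only [this]
    rw [Finset.sum_comm]
    calc ∑ p : S × A, ∑ s' : S, saDistSA π P s a k p * P p.1 p.2 s'
        = ∑ p : S × A, saDistSA π P s a k p := by
          refine Finset.sum_congr rfl fun p _ => ?_
          rw [← Finset.mul_sum, hP.2, mul_one]
      _ = 1 := ih

lemma saDistS_eq_sum (hπ : IsPolicy π) (s : S) :
    ∀ n q, saDistS π P s n q = ∑ a : A, π s a * saDistSA π P s a n q := by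
  intro n
  induction n with
  | zero =>
    intro q
    simp only [saDistS, saDistSA]
    rcases q with ⟨qs, qa⟩
    by_cases h : qs = s
    · subst h; simp [Prod.ext_iff]
    · simp [Prod.ext_iff, h]
  | succ k ih =>
    intro q
    simp only [saDistS, saDistSA, ih]
    simp only [Finset.sum_mul, Finset.mul_sum]
    rw [Finset.sum_comm]
    refine Finset.sum_congr rfl fun a _ => Finset.sum_congr rfl fun p _ => ?_
    ring

lemma saDistSA_comp (hπ : IsPolicy π) (s : S) (a : A) (n : ℕ) :
    ∀ j q, saDistSA π P s a (n + 1 + j) q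
      = ∑ p : S × A, saDistSA π P s a (n + 1) p * saDistS π P p.1 j q := by
  intro j
  induction j with
  | zero =>
    intro q
    simp only [Nat.add_zero, saDistS, saDistSA]
    conv_rhs => rw [Fintype.sum_prod_type]
    have h1 : ∀ s' : S, ∑ a' : A,
        ((∑ u : S × A, saDistSA π P s a n u * P u.1 u.2 s') * π s' a') *
          ((if q.1 = s' then 1 else 0) * π q.1 q.2)
        = (if q.1 = s' then
            (∑ u : S × A, saDistSA π P s a n u * P u.1 u.2 s') * π q.1 q.2 else 0) := by
      intro s'
      split
      · rw [← Finset.sum_mul, ← Finset.mul_sum, hπ.2, mul_one]; ring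
      · simp
    simp only [h1, Finset.sum_ite_eq, Finset.mem_univ, if_true]
  | succ k ih =>
    intro q
    show saDistSA π P s a ((n + 1 + k) + 1) q = _
    simp only [saDistSA, saDistS, ih]
    simp only [Finset.sum_mul, Finset.mul_sum]
    rw [Finset.sum_comm]
    refine Finset.sum_congr rfl fun p _ => Finset.sum_congr rfl fun u _ =>
      Finset.sum_congr rfl fun x _ => ?_
    ring

end Aux

section Aux2
variable [Fintype S] [Fintype A] [DecidableEq S] [DecidableEq A]
variable {π : S → A → ℝ} {P : S → A → S → ℝ} {r : S → A → ℝ} {γ : ℝ}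

/-- The expected reward at step k, starting from (s,a). -/
noncomputable def Rk (π : S → A → ℝ) (P : S → A → S → ℝ) (r : S → A → ℝ) (s : S) (a : A)
    (k : ℕ) : ℝ := ∑ sa : S × A, saDistSA π P s a k sa * r sa.1 sa.2

lemma Rk_abs_le (hπ : IsPolicy π) (hP : IsKernel P) (s : S) (a : A) (k : ℕ) :
    |Rk π P r s a k| ≤ ∑ sa : S × A, |r sa.1 sa.2| + 1 := by
  classical
  have h1 : |Rk π P r s a k| ≤ ∑ sa : S × A, |saDistSA π P s a k sa * r sa.1 sa.2| :=
    Finset.abs_sum_le_sum_abs _ _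
  have h2 : ∀ sa : S × A, |saDistSA π P s a k sa * r sa.1 sa.2| ≤ |r sa.1 sa.2| := by
    intro sa
    rw [abs_mul]
    have hd0 : 0 ≤ saDistSA π P s a k sa := saDistSA_nonneg hπ hP s a k sa
    have hd1 : saDistSA π P s a k sa ≤ 1 := by
      calc saDistSA π P s a k sa ≤ ∑ q : S × A, saDistSA π P s a k q :=
            Finset.single_le_sum (fun q _ => saDistSA_nonneg hπ hP s a k q) (Finset.mem_univ sa)
        _ = 1 := saDistSA_sum_one hπ hP s a k
    calc |saDistSA π P s a k sa| * |r sa.1 sa.2| ≤ 1 * |r sa.1 sa.2| := by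
          apply mul_le_mul_of_nonneg_right _ (abs_nonneg _)
          rwa [abs_of_nonneg hd0]
      _ = |r sa.1 sa.2| := one_mul _
  calc |Rk π P r s a k| ≤ ∑ sa : S × A, |r sa.1 sa.2| :=
        h1.trans (Finset.sum_le_sum fun sa _ => h2 sa)
    _ ≤ ∑ sa : S × A, |r sa.1 sa.2| + 1 := by linarith

lemma summable_Rk (hπ : IsPolicy π) (hP : IsKernel P) (hγ0 : 0 ≤ γ) (hγ1 : γ < 1)
    (s : S) (a : A) : Summable (fun k : ℕ => γ ^ k * Rk π P r s a k) := by
  set M : ℝ := ∑ sa : S × A, |r sa.1 sa.2| + 1 with hM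
  have hMsum : Summable (fun k : ℕ => M * γ ^ k) :=
    (summable_geometric_of_lt_one hγ0 hγ1).mul_left M
  refine Summable.of_norm_bounded hMsum fun k => ?_
  rw [Real.norm_eq_abs, abs_mul, abs_pow, abs_of_nonneg hγ0]
  calc γ ^ k * |Rk π P r s a k| ≤ γ ^ k * M :=
        mul_le_mul_of_nonneg_left (Rk_abs_le hπ hP s a k) (pow_nonneg hγ0 k)
    _ = M * γ ^ k := mul_comm _ _

lemma Qpi_eq_tsum_Rk (s : S) (a : A) :
    Qpi π P r γ s a = ∑' k : ℕ, γ ^ k * Rk π P r s a k := rfl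

lemma Vpi_eq_sum_Qpi (hπ : IsPolicy π) (hP : IsKernel P) (hγ0 : 0 ≤ γ) (hγ1 : γ < 1)
    (s : S) : Vpi π P r γ s = ∑ a : A, π s a * Qpi π P r γ s a := by
  have key : ∀ k : ℕ, γ ^ k * ∑ sa : S × A, saDistS π P s k sa * r sa.1 sa.2
      = ∑ a : A, π s a * (γ ^ k * Rk π P r s a k) := by
    intro k
    simp only [saDistS_eq_sum (π := π) (P := P) hπ s k, Rk]
    simp only [Finset.sum_mul, Finset.mul_sum]
    rw [Finset.sum_comm]
    refine Finset.sum_congr rfl fun a _ => Finset.sum_congr rfl fun q _ => by ring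
  rw [Vpi]
  simp only [key]
  rw [Summable.tsum_finsetSum fun a _ => ((summable_Rk hπ hP hγ0 hγ1 s a).mul_left (π s a))]
  refine Finset.sum_congr rfl fun a _ => ?_
  rw [tsum_mul_left, Qpi_eq_tsum_Rk]

lemma Qpi_expand (hπ : IsPolicy π) (hP : IsKernel P) (hγ0 : 0 ≤ γ) (hγ1 : γ < 1)
    (s : S) (a : A) (n : ℕ) :
    Qpi π P r γ s a = (∑ k ∈ Finset.range (n + 1), γ ^ k * Rk π P r s a k)
      + γ ^ (n + 1) * ∑ p : S × A, saDistSA π P s a (n + 1) p * Vpi π P r γ p.1 := by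
  have hsum := summable_Rk (r := r) hπ hP hγ0 hγ1 s a
  rw [Qpi_eq_tsum_Rk, ← hsum.sum_add_tsum_nat_add (n + 1)]
  congr 1
  -- tail = γ^(n+1) * bootstrapped term
  have hV : ∀ p : S × A, Vpi π P r γ p.1
      = ∑' j : ℕ, γ ^ j * ∑ q : S × A, saDistS π P p.1 j q * r q.1 q.2 := fun p => rfl
  have hVsummable : ∀ p : S × A,
      Summable (fun j : ℕ => γ ^ j * ∑ q : S × A, saDistS π P p.1 j q * r q.1 q.2) := by
    intro p
    have : ∀ j, γ ^ j * ∑ q : S × A, saDistS π P p.1 j q * r q.1 q.2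
        = ∑ a' : A, π p.1 a' * (γ ^ j * Rk π P r p.1 a' j) := by
      intro j
      simp only [saDistS_eq_sum (π := π) (P := P) hπ p.1 j, Rk]
      simp only [Finset.sum_mul, Finset.mul_sum]
      rw [Finset.sum_comm]
      exact Finset.sum_congr rfl fun a' _ => Finset.sum_congr rfl fun q _ => by ring
    simp only [this]
    exact summable_sum fun a' _ => (summable_Rk hπ hP hγ0 hγ1 p.1 a').mul_left (π p.1 a')
  calc ∑' j : ℕ, γ ^ (j + (n + 1)) * Rk π P r s a (j + (n + 1))
      = ∑' j : ℕ, γ ^ (n + 1) *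
          (∑ p : S × A, saDistSA π P s a (n + 1) p *
            (γ ^ j * ∑ q : S × A, saDistS π P p.1 j q * r q.1 q.2)) := by
        refine tsum_congr fun j => ?_
        have hcomp : Rk π P r s a (j + (n + 1))
            = ∑ q : S × A, (∑ p : S × A,
                saDistSA π P s a (n + 1) p * saDistS π P p.1 j q) * r q.1 q.2 := by
          have : j + (n + 1) = n + 1 + j := by ring
          rw [Rk, this]
          exact Finset.sum_congr rfl fun q _ => by
            rw [saDistSA_comp hπ s a n j q]
        rw [hcomp, pow_add]
        simp only [Finset.sum_mul, Finset.mul_sum]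
        rw [Finset.sum_comm]
        refine Finset.sum_congr rfl fun p _ => Finset.sum_congr rfl fun q _ => by ring
    _ = γ ^ (n + 1) * ∑ p : S × A, saDistSA π P s a (n + 1) p * Vpi π P r γ p.1 := by
        rw [tsum_mul_left]
        congr 1
        rw [Summable.tsum_finsetSum fun p _ => ((hVsummable p).mul_left (saDistSA π P s a (n + 1) p))]
        refine Finset.sum_congr rfl fun p _ => ?_
        rw [tsum_mul_left, hV p]
end Aux2


/-- if `E[V^π(s_{t'}) | s_t, a_t] = E[V^π(s_{t'}) | s_t]` for some `t' > t`
(stated, via the Markov property, for a start state-action pair and horizon `n = t' - t > 0`),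
then the advantage equals the difference of truncated expected returns; in particular, if the
transition distribution is action-independent then `A^π(s,a) = r(s,a) - ∑_{a'} π(a'|s) r(s,a')`. -/
theorem advantage_local
    [Fintype S] [Fintype A] [DecidableEq S] [DecidableEq A]
    (π : S → A → ℝ) (P : S → A → S → ℝ) (r : S → A → ℝ) (γ : ℝ)
    (hπ : IsPolicy π) (hP : IsKernel P) (hγ0 : 0 ≤ γ) (hγ1 : γ < 1) :
    (∀ (s : S) (a : A) (n : ℕ), 0 < n →
      (∑ sa : S × A, saDistSA π P s a n sa * Vpi π P r γ sa.1
          = ∑ a0 : A, π s a0 * ∑ sa : S × A, saDistSA π P s a0 n sa * Vpi π P r γ sa.1) →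
      Api π P r γ s a
        = (∑ k ∈ Finset.range n, γ ^ k * ∑ sa : S × A, saDistSA π P s a k sa * r sa.1 sa.2)
          - ∑ a0 : A, π s a0 *
              ∑ k ∈ Finset.range n, γ ^ k * ∑ sa : S × A, saDistSA π P s a0 k sa * r sa.1 sa.2)
    ∧ ((∀ s a a', P s a = P s a') → ∀ (s : S) (a : A),
        Api π P r γ s a = r s a - ∑ a' : A, π s a' * r s a') := by
  
  classical
  have main : ∀ (s : S) (a : A) (n : ℕ), 0 < n →
      (∑ sa : S × A, saDistSA π P s a n sa * Vpi π P r γ sa.1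
          = ∑ a0 : A, π s a0 * ∑ sa : S × A, saDistSA π P s a0 n sa * Vpi π P r γ sa.1) →
      Api π P r γ s a
        = (∑ k ∈ Finset.range n, γ ^ k * ∑ sa : S × A, saDistSA π P s a k sa * r sa.1 sa.2)
          - ∑ a0 : A, π s a0 *
              ∑ k ∈ Finset.range n, γ ^ k * ∑ sa : S × A, saDistSA π P s a0 k sa * r sa.1 sa.2 := by
    intro s a n hn hyp
    obtain ⟨m, rfl⟩ : ∃ m, n = m + 1 := ⟨n - 1, (Nat.succ_pred_eq_of_pos hn).symm⟩
    have expand : ∀ a0 : A, Qpi π P r γ s a0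
        = (∑ k ∈ Finset.range (m + 1), γ ^ k * Rk π P r s a0 k)
          + γ ^ (m + 1) * ∑ p : S × A, saDistSA π P s a0 (m + 1) p * Vpi π P r γ p.1 :=
      fun a0 => Qpi_expand hπ hP hγ0 hγ1 s a0 m
    rw [Api, Vpi_eq_sum_Qpi hπ hP hγ0 hγ1 s]
    simp only [expand, Rk]
    have hsplit : ∀ (X B : A → ℝ) (c : ℝ), ∑ a0 : A, π s a0 * (X a0 + c * B a0)
        = (∑ a0 : A, π s a0 * X a0) + c * ∑ a0 : A, π s a0 * B a0 := by
      intro X B c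
      rw [Finset.mul_sum, ← Finset.sum_add_distrib]
      exact Finset.sum_congr rfl fun a0 _ => by ring
    rw [hsplit, ← hyp]
    ring
  refine ⟨main, fun hind s a => ?_⟩
  have hsa1 : ∀ b : A, ∀ sa : S × A, saDistSA π P s b 1 sa = P s a sa.1 * π sa.1 sa.2 := by
    intro b sa
    show (∑ p : S × A, (if p = (s, b) then (1 : ℝ) else 0) * P p.1 p.2 sa.1) * π sa.1 sa.2 = _
    simp only [ite_mul, one_mul, zero_mul, Finset.sum_ite_eq', Finset.mem_univ, if_true]
    rw [hind s b a]
  have h1 : ∑ sa : S × A, saDistSA π P s a 1 sa * Vpi π P r γ sa.1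
      = ∑ a0 : A, π s a0 * ∑ sa : S × A, saDistSA π P s a0 1 sa * Vpi π P r γ sa.1 := by
    simp only [hsa1]
    rw [← Finset.sum_mul, hπ.2 s, one_mul]
  have h0 : ∀ b : A, ∑ sa : S × A, saDistSA π P s b 0 sa * r sa.1 sa.2 = r s b := by
    intro b
    show ∑ sa : S × A, (if sa = (s, b) then (1 : ℝ) else 0) * r sa.1 sa.2 = r s b
    simp only [ite_mul, one_mul, zero_mul, Finset.sum_ite_eq', Finset.mem_univ, if_true]
  rw [main s a 1 one_pos h1]
  simp only [Finset.sum_range_one, pow_zero, one_mul, h0]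
end

section
/- (Bootstrapped DAE, value part) Let V_target: S → ℝ be any function and Â any π-centered function. Define L(Â, V̂) = E_{τ∼π}[(∑_{t'=0}^{t−1} γ^{t'}(r_{t'} − Â(s_{t'},a_{t'})) + γ^t V_target(s_t) − V̂(s_0))²]. Then the minimizer V̂* over functions V̂: S → ℝ satisfies, for every s with p(s_0=s)>0: V̂*(s) = E[∑_{t'=0}^{t−1} γ^{t'} r_{t'} + γ^t V_target(s_t) | s_0 = s], independently of the choice of the π-centered Â. -/
open Finset Filter Topology

variable {S A : Type*}

section AuxLemmas
variable [Fintype S] [Fintype A] [DecidableEq S] [DecidableEq A]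
variable (π : S → A → ℝ) (P : S → A → S → ℝ)

lemma pathProb_snoc (ν : S → ℝ) (n : ℕ) (τ : Fin (n + 1) → S × A) (sa : S × A) :
    pathProb π P ν (n + 1) (Fin.snoc τ sa) =
      pathProb π P ν n τ *
        (P (τ (Fin.last n)).1 (τ (Fin.last n)).2 sa.1 * π sa.1 sa.2) := by
  have h0 : (Fin.snoc τ sa : Fin (n + 2) → S × A) 0 = τ 0 := by
    rw [show (0 : Fin (n + 2)) = Fin.castSucc 0 from rfl, Fin.snoc_castSucc]
  have hπprod : ∏ k : Fin (n + 2),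
      π ((Fin.snoc τ sa : Fin (n + 2) → S × A) k).1 ((Fin.snoc τ sa : Fin (n + 2) → S × A) k).2
      = (∏ k : Fin (n + 1), π (τ k).1 (τ k).2) * π sa.1 sa.2 := by
    rw [Fin.prod_univ_castSucc]
    simp [Fin.snoc_castSucc, Fin.snoc_last]
  have hPprod : ∏ k : Fin (n + 1),
      P ((Fin.snoc τ sa : Fin (n + 2) → S × A) k.castSucc).1
        ((Fin.snoc τ sa : Fin (n + 2) → S × A) k.castSucc).2
        ((Fin.snoc τ sa : Fin (n + 2) → S × A) k.succ).1
      = (∏ k : Fin n, P (τ k.castSucc).1 (τ k.castSucc).2 (τ k.succ).1)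
          * P (τ (Fin.last n)).1 (τ (Fin.last n)).2 sa.1 := by
    rw [Fin.prod_univ_castSucc]
    simp [Fin.snoc_castSucc, Fin.snoc_last, Fin.succ_castSucc, Fin.succ_last, -Fin.castSucc_succ]
  unfold pathProb
  rw [hπprod, hPprod, h0]
  ring

lemma sum_snoc {X : Type*} [Fintype X] (n : ℕ) (F : (Fin (n + 2) → X) → ℝ) :
    ∑ τ : Fin (n + 2) → X, F τ = ∑ τ : Fin (n + 1) → X, ∑ x : X, F (Fin.snoc τ x) := by
  rw [← (Fin.snocEquiv (fun _ => X)).sum_comp F, Fintype.sum_prod_type, Finset.sum_comm]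
  rfl

lemma kernelPolicy_sum (hπ : IsPolicy π) (hP : IsKernel P) (s : S) (a : A) :
    ∑ x : S × A, P s a x.1 * π x.1 x.2 = 1 := by
  rw [Fintype.sum_prod_type]
  simp only [← Finset.mul_sum, hπ.2, mul_one]
  exact hP.2 s a

lemma pathExp_marginal (hπ : IsPolicy π) (hP : IsKernel P) :
    ∀ (n : ℕ) (ν : S → ℝ) (k : Fin (n + 1)) (g : S × A → ℝ),
      ∑ τ : Fin (n + 1) → S × A, pathProb π P ν n τ * g (τ k)
        = ∑ sa : S × A, saDistI π P ν (k : ℕ) sa * g sa := by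
  intro n
  induction n with
  | zero =>
    intro ν k g
    have hk : k = 0 := Fin.fin_one_eq_zero k
    subst hk
    rw [← (Equiv.funUnique (Fin 1) (S × A)).symm.sum_comp
      (fun τ => pathProb π P ν 0 τ * g (τ 0))]
    apply Finset.sum_congr rfl
    intro sa _
    simp [pathProb, saDistI]
  | succ n ih =>
    intro ν k g
    induction k using Fin.lastCases with
    | last =>
      rw [sum_snoc]
      have : ∀ τ : Fin (n + 1) → S × A, ∑ x : S × A,
          pathProb π P ν (n + 1) (Fin.snoc τ x) * g ((Fin.snoc τ x : Fin (n+2) → S × A) (Fin.last (n + 1)))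
          = ∑ x : S × A, pathProb π P ν n τ *
              (P (τ (Fin.last n)).1 (τ (Fin.last n)).2 x.1 * π x.1 x.2) * g x := by
        intro τ
        apply Finset.sum_congr rfl
        intro x _
        rw [pathProb_snoc, Fin.snoc_last]
      simp only [this]
      rw [Finset.sum_comm]
      have hcoe : ((Fin.last (n + 1) : Fin (n + 2)) : ℕ) = n + 1 := rfl
      rw [hcoe]
      apply Finset.sum_congr rfl
      intro x _
      have : ∑ τ : Fin (n + 1) → S × A,
          pathProb π P ν n τ * (P (τ (Fin.last n)).1 (τ (Fin.last n)).2 x.1 * π x.1 x.2) * g x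
          = (∑ τ : Fin (n + 1) → S × A,
              pathProb π P ν n τ * (P (τ (Fin.last n)).1 (τ (Fin.last n)).2 x.1))
              * (π x.1 x.2 * g x) := by
        rw [Finset.sum_mul]
        apply Finset.sum_congr rfl
        intro τ _
        ring
      rw [this, ih ν (Fin.last n) (fun p => P p.1 p.2 x.1)]
      have hln : ((Fin.last n : Fin (n + 1)) : ℕ) = n := rfl
      rw [hln]
      simp only [saDistI]
      ring
    | cast j =>
      rw [sum_snoc]
      have : ∀ τ : Fin (n + 1) → S × A, ∑ x : S × A,
          pathProb π P ν (n + 1) (Fin.snoc τ x) * g ((Fin.snoc τ x : Fin (n+2) → S × A) j.castSucc)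
          = pathProb π P ν n τ * g (τ j) := by
        intro τ
        have : ∀ x : S × A,
            pathProb π P ν (n + 1) (Fin.snoc τ x) * g ((Fin.snoc τ x : Fin (n+2) → S × A) j.castSucc)
            = pathProb π P ν n τ * g (τ j) *
                (P (τ (Fin.last n)).1 (τ (Fin.last n)).2 x.1 * π x.1 x.2) := by
          intro x
          rw [pathProb_snoc, Fin.snoc_castSucc]
          ring
        rw [Finset.sum_congr rfl (fun x _ => this x), ← Finset.mul_sum,
          kernelPolicy_sum π P hπ hP, mul_one]
      simp only [this]
      rw [ih ν j g]
      norm_num [Fin.coe_castSucc]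
  
lemma saDistS_eq_I (s : S) (k : ℕ) :
    saDistS π P s k = saDistI π P (fun s' => if s' = s then 1 else 0) k := by
  induction k with
  | zero => rfl
  | succ k ih => simp [saDistS, saDistI, ih]

lemma centered_saDistS_sum {Ahat : S → A → ℝ} (hA : IsCentered π Ahat) (s : S) (k : ℕ) :
    ∑ sa : S × A, saDistS π P s k sa * Ahat sa.1 sa.2 = 0 := by
  have key : ∀ c : S → ℝ,
      ∑ sa : S × A, (c sa.1 * π sa.1 sa.2) * Ahat sa.1 sa.2 = 0 := by
    intro c
    rw [Fintype.sum_prod_type]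
    have : ∀ s' : S, ∑ a : A, (c s' * π s' a) * Ahat s' a = 0 := by
      intro s'
      have : ∑ a : A, (c s' * π s' a) * Ahat s' a
          = c s' * ∑ a : A, π s' a * Ahat s' a := by
        rw [Finset.mul_sum]; apply Finset.sum_congr rfl; intro a _; ring
      rw [this, hA s', mul_zero]
    simp [this]
  cases k with
  | zero => exact key (fun s' => if s' = s then 1 else 0)
  | succ k => exact key (fun s' => ∑ p : S × A, saDistS π P s k p * P p.1 p.2 s')

lemma pathProb_ind (ν : S → ℝ) (n : ℕ) (s : S) (τ : Fin (n + 1) → S × A) :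
    pathProb π P ν n τ * (if (τ 0).1 = s then 1 else 0)
      = ν s * pathProb π P (fun s' => if s' = s then 1 else 0) n τ := by
  unfold pathProb
  by_cases h : (τ 0).1 = s
  · rw [h]; simp; ring
  · simp [h]

lemma minimizer_orthogonal (μ0 : S → ℝ) (t : ℕ) (F : (Fin (t + 1) → S × A) → ℝ)
    (Vstar : S → ℝ)
    (hmin : ∀ Vhat : S → ℝ,
      pathExp π P μ0 t (fun τ => (F τ - Vstar (τ 0).1) ^ 2)
        ≤ pathExp π P μ0 t (fun τ => (F τ - Vhat (τ 0).1) ^ 2))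
    (s : S)
    (hC : 0 < ∑ τ : Fin (t + 1) → S × A,
        pathProb π P μ0 t τ * (if (τ 0).1 = s then 1 else 0)) :
    ∑ τ : Fin (t + 1) → S × A,
        pathProb π P μ0 t τ *
          ((if (τ 0).1 = s then 1 else 0) * (F τ - Vstar (τ 0).1)) = 0 := by
  set CC : ℝ := ∑ τ : Fin (t + 1) → S × A,
      pathProb π P μ0 t τ * (if (τ 0).1 = s then 1 else 0) with hCC
  set DD : ℝ := ∑ τ : Fin (t + 1) → S × A,
      pathProb π P μ0 t τ *
        ((if (τ 0).1 = s then 1 else 0) * (F τ - Vstar (τ 0).1)) with hDD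
  have expand : ∀ ε : ℝ,
      pathExp π P μ0 t
          (fun τ => (F τ - (Vstar (τ 0).1 + ε * (if (τ 0).1 = s then 1 else 0))) ^ 2)
        = pathExp π P μ0 t (fun τ => (F τ - Vstar (τ 0).1) ^ 2)
          + (ε ^ 2 * CC - 2 * ε * DD) := by
    intro ε
    unfold pathExp
    rw [hCC, hDD, Finset.mul_sum, Finset.mul_sum, ← Finset.sum_sub_distrib,
      ← Finset.sum_add_distrib]
    apply Finset.sum_congr rfl
    intro τ _
    by_cases h : (τ 0).1 = s <;> simp only [h, if_pos, if_neg, if_true, if_false] <;> ring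
  have hquad : ∀ ε : ℝ, 0 ≤ ε ^ 2 * CC - 2 * ε * DD := by
    intro ε
    have h : pathExp π P μ0 t (fun τ => (F τ - Vstar (τ 0).1) ^ 2)
        ≤ pathExp π P μ0 t
            (fun τ => (F τ - (Vstar (τ 0).1 + ε * (if (τ 0).1 = s then 1 else 0))) ^ 2) :=
      hmin (fun s' => Vstar s' + ε * (if s' = s then 1 else 0))
    rw [expand ε] at h
    linarith
  have h1 := hquad (DD / CC)
  have hne : CC ≠ 0 := ne_of_gt hC
  have heq : (DD / CC) ^ 2 * CC - 2 * (DD / CC) * DD = -(DD ^ 2) / CC := by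
    field_simp
    ring
  rw [heq] at h1
  have h3 : 0 ≤ -(DD ^ 2) := by
    have := mul_nonneg h1 hC.le
    rwa [div_mul_cancel₀ _ hne] at this
  have h4 : DD ^ 2 = 0 := le_antisymm (by linarith) (sq_nonneg DD)
  exact pow_eq_zero_iff two_ne_zero |>.mp h4

end AuxLemmas

/-- Bootstrapped DAE, value part: for any bootstrapping target `Vtgt` and any
`π`-centered `Â`, the minimizer `V̂*` of
`L(Â,V̂) = E[(∑_{t'<t} γ^{t'}(r_{t'} - Â_{t'}) + γ^t Vtgt(s_t) - V̂(s_0))²]`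
over all `V̂ : S → ℝ` satisfies, for every `s` with `μ0(s) > 0`,
`V̂*(s) = E[∑_{t'<t} γ^{t'} r_{t'} + γ^t Vtgt(s_t) | s_0 = s]`, independently of `Â`. -/
theorem bootstrapped_dae_value_part
    [Fintype S] [Fintype A] [DecidableEq S] [DecidableEq A]
    (π : S → A → ℝ) (P : S → A → S → ℝ) (r : S → A → ℝ) (γ : ℝ) (μ0 : S → ℝ)
    (hπ : IsPolicy π) (hP : IsKernel P) (hμ : IsDist μ0) (hγ0 : 0 ≤ γ) (hγ1 : γ < 1)
    (t : ℕ) (Vtgt : S → ℝ) :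
    ∀ Ahat : S → A → ℝ, IsCentered π Ahat →
      ∀ Vstar : S → ℝ,
        (∀ Vhat : S → ℝ,
          pathExp π P μ0 t (fun τ =>
            ((∑ k : Fin t, γ ^ (k : ℕ) *
                (r (τ k.castSucc).1 (τ k.castSucc).2 - Ahat (τ k.castSucc).1 (τ k.castSucc).2))
              + γ ^ t * Vtgt (τ (Fin.last t)).1 - Vstar (τ 0).1) ^ 2)
          ≤ pathExp π P μ0 t (fun τ =>
            ((∑ k : Fin t, γ ^ (k : ℕ) *
                (r (τ k.castSucc).1 (τ k.castSucc).2 - Ahat (τ k.castSucc).1 (τ k.castSucc).2))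
              + γ ^ t * Vtgt (τ (Fin.last t)).1 - Vhat (τ 0).1) ^ 2)) →
        ∀ s : S, 0 < μ0 s →
          Vstar s
            = (∑ k ∈ Finset.range t, γ ^ k * ∑ sa : S × A, saDistS π P s k sa * r sa.1 sa.2)
              + γ ^ t * ∑ sa : S × A, saDistS π P s t sa * Vtgt sa.1 := by
  intro Ahat hA Vstar hmin s hs
  set F : (Fin (t + 1) → S × A) → ℝ := fun τ =>
    (∑ k : Fin t, γ ^ (k : ℕ) *
        (r (τ k.castSucc).1 (τ k.castSucc).2 - Ahat (τ k.castSucc).1 (τ k.castSucc).2))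
      + γ ^ t * Vtgt (τ (Fin.last t)).1 with hF
  set dl : S → ℝ := fun s' => if s' = s then (1 : ℝ) else 0 with hdl
  -- total mass of the conditional path distribution
  have hmass : ∑ τ : Fin (t + 1) → S × A, pathProb π P dl t τ = 1 := by
    have h := pathExp_marginal π P hπ hP t dl 0 (fun _ => 1)
    simp only [mul_one] at h
    rw [h, show ((0 : Fin (t + 1)) : ℕ) = 0 from rfl]
    rw [Fintype.sum_prod_type]
    simp only [saDistI]
    have : ∀ s' : S, ∑ a : A, dl s' * π s' a = if s' = s then (1 : ℝ) else 0 := by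
      intro s'
      by_cases h' : s' = s <;> simp [hdl, h', hπ.2]
    rw [Finset.sum_congr rfl (fun s' _ => this s')]
    simp
  have hfact : ∀ τ : Fin (t + 1) → S × A,
      pathProb π P μ0 t τ * (if (τ 0).1 = s then (1 : ℝ) else 0)
        = μ0 s * pathProb π P dl t τ := fun τ => pathProb_ind π P μ0 t s τ
  have hCval : (∑ τ : Fin (t + 1) → S × A,
      pathProb π P μ0 t τ * (if (τ 0).1 = s then (1 : ℝ) else 0)) = μ0 s := by
    rw [Finset.sum_congr rfl (fun τ _ => hfact τ), ← Finset.mul_sum, hmass, mul_one]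
  have hCpos : 0 < ∑ τ : Fin (t + 1) → S × A,
      pathProb π P μ0 t τ * (if (τ 0).1 = s then (1 : ℝ) else 0) := by
    rw [hCval]; exact hs
  have hD0 := minimizer_orthogonal π P μ0 t F Vstar hmin s hCpos
  -- rewrite each summand of hD0
  have step : ∀ τ : Fin (t + 1) → S × A,
      pathProb π P μ0 t τ * ((if (τ 0).1 = s then (1 : ℝ) else 0) * (F τ - Vstar (τ 0).1))
        = μ0 s * (pathProb π P dl t τ * F τ)
          - (μ0 s * Vstar s) * pathProb π P dl t τ := by
    intro τ
    have h1 := hfact τ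
    by_cases h : (τ 0).1 = s
    · simp only [if_pos h, mul_one] at h1
      rw [if_pos h, h]
      calc pathProb π P μ0 t τ * (1 * (F τ - Vstar s))
          = (pathProb π P μ0 t τ) * (F τ - Vstar s) := by ring
        _ = (μ0 s * pathProb π P dl t τ) * (F τ - Vstar s) := by rw [h1]
        _ = μ0 s * (pathProb π P dl t τ * F τ)
            - (μ0 s * Vstar s) * pathProb π P dl t τ := by ring
    · simp only [if_neg h, mul_zero] at h1
      rw [if_neg h, zero_mul, mul_zero]
      have h2 : μ0 s * pathProb π P dl t τ = 0 := h1.symm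
      calc (0 : ℝ) = (μ0 s * pathProb π P dl t τ) * (F τ - Vstar s) := by rw [h2]; ring
        _ = μ0 s * (pathProb π P dl t τ * F τ)
            - (μ0 s * Vstar s) * pathProb π P dl t τ := by ring
  rw [Finset.sum_congr rfl (fun τ _ => step τ), Finset.sum_sub_distrib,
    ← Finset.mul_sum, ← Finset.mul_sum, hmass, mul_one] at hD0
  -- compute the conditional expectation of F
  have hsum : ∑ τ : Fin (t + 1) → S × A, pathProb π P dl t τ * F τ
      = (∑ k ∈ Finset.range t, γ ^ k * ∑ sa : S × A, saDistS π P s k sa * r sa.1 sa.2)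
        + γ ^ t * ∑ sa : S × A, saDistS π P s t sa * Vtgt sa.1 := by
    have e1 : ∀ τ : Fin (t + 1) → S × A,
        pathProb π P dl t τ * F τ
          = (∑ k : Fin t,
              (γ ^ (k : ℕ) * (pathProb π P dl t τ * r (τ k.castSucc).1 (τ k.castSucc).2)
                - γ ^ (k : ℕ) *
                    (pathProb π P dl t τ * Ahat (τ k.castSucc).1 (τ k.castSucc).2)))
            + γ ^ t * (pathProb π P dl t τ * Vtgt (τ (Fin.last t)).1) := by
      intro τ
      rw [hF]
      simp only []
      rw [mul_add, Finset.mul_sum]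
      congr 1
      · apply Finset.sum_congr rfl
        intro k _
        ring
      · ring
    rw [Finset.sum_congr rfl (fun τ _ => e1 τ), Finset.sum_add_distrib, Finset.sum_comm]
    congr 1
    · rw [← Fin.sum_univ_eq_sum_range
        (fun k => γ ^ k * ∑ sa : S × A, saDistS π P s k sa * r sa.1 sa.2) t]
      apply Finset.sum_congr rfl
      intro k _
      rw [Finset.sum_sub_distrib, ← Finset.mul_sum, ← Finset.mul_sum,
        pathExp_marginal π P hπ hP t dl k.castSucc (fun sa => r sa.1 sa.2),
        pathExp_marginal π P hπ hP t dl k.castSucc (fun sa => Ahat sa.1 sa.2)]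
      rw [show ((k.castSucc : Fin (t + 1)) : ℕ) = (k : ℕ) from rfl]
      rw [← saDistS_eq_I π P s (k : ℕ)]
      rw [centered_saDistS_sum π P hA s (k : ℕ), mul_zero, sub_zero]
    · rw [← Finset.mul_sum,
        pathExp_marginal π P hπ hP t dl (Fin.last t) (fun sa => Vtgt sa.1),
        show ((Fin.last t : Fin (t + 1)) : ℕ) = t from rfl,
        ← saDistS_eq_I π P s t]
  -- conclude
  rw [hsum] at hD0
  have hmul : μ0 s * Vstar s
      = μ0 s * ((∑ k ∈ Finset.range t, γ ^ k * ∑ sa : S × A, saDistS π P s k sa * r sa.1 sa.2)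
          + γ ^ t * ∑ sa : S × A, saDistS π P s t sa * Vtgt sa.1) := by linarith
  exact mul_left_cancel₀ (ne_of_gt hs) hmul
end
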